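/- Let ω, c be real numbers with c > ω² > 0, and let B(ω,c,c) be the 4×4 real matrix with rows (0,0,1,0), (0,0,0,1), (c,0,0,2ω), (0,c,−2ω,0). Then every complex eigenvalue of B(ω,c,c) has nonzero real part, and at least one eigenvalue has strictly positive real part; in particular the corresponding linearized system is spectrally unstable. -/

import Mathlib

open Polynomial

/-- The linearization matrix of the planar system `ẍ = 2ωJẋ + diag(c₁,c₂)x`. -/
def B (ω c₁ c₂ : ℝ) : Matrix (Fin 4) (Fin 4) ℝ :=
  !![0, 0, 1, 0;
     0, 0, 0, 1;
     c₁, 0, 0, 2*ω;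
     0, c₂, -(2*ω), 0]

lemma B_charpoly (ω c : ℝ) : ((B ω c c).map Complex.ofReal).charpoly
    = X^4 + (4 * C (ω:ℂ)^2 - 2 * C (c:ℂ)) * X^2 + C (c:ℂ)^2 := by
  rw [Matrix.charpoly]
  simp [B, Matrix.charmatrix, Matrix.det_succ_row_zero, Fin.sum_univ_succ, Matrix.submatrix,
    Matrix.map_apply, Matrix.diagonal_apply, Fin.succAbove, map_ofNat]
  ring

theorem B_spectrally_unstable_of_gt (ω c : ℝ) (h0 : 0 < ω ^ 2) (hc : ω ^ 2 < c) :
    (∀ μ : ℂ, (((B ω c c).map (Complex.ofReal)).charpoly).IsRoot μ → μ.re ≠ 0) ∧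
    (∃ μ : ℂ, (((B ω c c).map (Complex.ofReal)).charpoly).IsRoot μ ∧ 0 < μ.re) := by
  have hev : ∀ μ : ℂ, (((B ω c c).map Complex.ofReal).charpoly).IsRoot μ ↔
      μ^4 + (4*(ω:ℂ)^2 - 2*(c:ℂ))*μ^2 + (c:ℂ)^2 = 0 := by
    intro μ
    rw [B_charpoly, IsRoot.def]
    simp
  have part1 : ∀ μ : ℂ, (((B ω c c).map Complex.ofReal).charpoly).IsRoot μ → μ.re ≠ 0 := by
    intro μ hμ hre
    rw [hev] at hμ
    set b : ℝ := μ.im with hb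
    have hμb : μ = (b:ℂ) * Complex.I := by
      apply Complex.ext <;> simp [hre, hb]
    rw [hμb] at hμ
    have hr : ((b^4 + (2*c - 4*ω^2)*b^2 + c^2 : ℝ) : ℂ) = 0 := by
      push_cast
      linear_combination hμ + (-(b:ℂ)^4*(Complex.I^2-1) - (4*(ω:ℂ)^2-2*(c:ℂ))*(b:ℂ)^2) * Complex.I_sq
    have hr' : b^4 + (2*c - 4*ω^2)*b^2 + c^2 = 0 := by exact_mod_cast hr
    nlinarith [sq_nonneg (b^2 + c - 2*ω^2), mul_pos h0 (sub_pos.mpr hc), sq_nonneg b]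
  refine ⟨part1, ?_⟩
  obtain ⟨z, hz⟩ : ∃ z : ℂ, (((B ω c c).map Complex.ofReal).charpoly).IsRoot z := by
    apply Complex.exists_root
    rw [B_charpoly]
    have h4 : (X^4 + (4 * C (ω:ℂ)^2 - 2 * C (c:ℂ)) * X^2 + C (c:ℂ)^2).degree = 4 := by
      compute_degree!
    rw [h4]
    norm_num
  have hzneg : (((B ω c c).map Complex.ofReal).charpoly).IsRoot (-z) := by
    rw [hev] at hz ⊢
    linear_combination hz
  rcases lt_trichotomy z.re 0 with h | h | h
  · exact ⟨-z, hzneg, by simpa using h⟩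
  · exact absurd h (part1 z hz)
  · exact ⟨z, hz, h⟩
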